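/- The inverse Laplace transform of the inverse total Dirichlet-to-Neumann operator of two glued intervals satisfies the Poisson-resummation identity: for t > 0 and L₁, L₂ > 0, 2 Σ_{k≥1} ((−1)^{k+1}/(L₁+L₂)) e^{−π²k²t/(L₁+L₂)²} sin(πkL₁/(L₁+L₂)) sin(πkL₂/(L₁+L₂)) = (4πt)^{-1/2} Σ_{n∈ℤ} (e^{−(L₁+L₂)²n²/t} − e^{−((n+1)L₁+nL₂)²/t}). -/

import Mathlib

open Real

private lemma summable_gauss_shift (x c : ℝ) (hc : 0 < c) :
    Summable fun n : ℤ ↦ Real.exp (-c * ((n : ℝ) + x) ^ 2) := by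
  have h := HurwitzKernelBounds.summable_f_int 0 x (t := c / π) (by positivity)
  refine h.congr fun n ↦ ?_
  simp only [HurwitzKernelBounds.f_int, pow_zero, one_mul]
  congr 1
  field_simp

private lemma theta_cos (a x : ℝ) (ha : 0 < a) :
    ∑' n : ℤ, Real.exp (-π * a * (n : ℝ) ^ 2) * Real.cos (2 * π * x * (n : ℝ))
      = (1 / a ^ ((1:ℝ)/2)) * ∑' n : ℤ, Real.exp (-π / a * ((n : ℝ) + x) ^ 2) := by
  have ha' : 0 < (a : ℂ).re := by simpa using ha
  have key := Complex.tsum_exp_neg_quadratic ha' (-(Complex.I * (x : ℂ)))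
  have hre : ∀ n : ℤ, (-(π:ℂ) * (a:ℂ) * (n:ℂ) ^ 2 + 2 * (π:ℂ) * (-(Complex.I * (x:ℂ))) * (n:ℂ))
      = Complex.ofReal (-π * a * (n:ℝ) ^ 2) + Complex.ofReal (-(2 * π * x * (n:ℝ))) * Complex.I := by
    intro n; push_cast; ring
  have hsummable : Summable fun n : ℤ ↦
      Complex.exp (-(π:ℂ) * (a:ℂ) * (n:ℂ) ^ 2 + 2 * (π:ℂ) * (-(Complex.I * (x:ℂ))) * (n:ℂ)) := by
    apply Summable.of_norm
    have h0 : Summable fun n : ℤ ↦ Real.exp (-(π * a) * ((n : ℝ) + 0) ^ 2) :=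
      summable_gauss_shift 0 (π * a) (by positivity)
    have hre2 : ∀ r s : ℝ, ((r:ℂ) + (s:ℂ) * Complex.I).re = r := by intro r s; simp
    refine h0.congr fun n ↦ ?_
    rw [hre n, Complex.norm_exp, hre2]
    congr 1; ring
  have hL : (∑' n : ℤ, Real.exp (-π * a * (n:ℝ) ^ 2) * Real.cos (2 * π * x * (n:ℝ)))
      = (∑' n : ℤ, Complex.exp (-(π:ℂ) * (a:ℂ) * (n:ℂ) ^ 2
          + 2 * (π:ℂ) * (-(Complex.I * (x:ℂ))) * (n:ℂ))).re := by
    rw [Complex.re_tsum hsummable]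
    have hexpre : ∀ r s : ℝ, (Complex.exp ((r:ℂ) + (s:ℂ) * Complex.I)).re
        = Real.exp r * Real.cos s := by
      intro r s; rw [Complex.exp_re]; simp
    refine tsum_congr fun n ↦ ?_
    rw [hre n, hexpre, Real.cos_neg]
  have hR : (1 / (a:ℂ) ^ (1 / 2 : ℂ) * ∑' n : ℤ,
        Complex.exp (-(π:ℂ) / (a:ℂ) * ((n:ℂ) + Complex.I * (-(Complex.I * (x:ℂ)))) ^ 2))
      = Complex.ofReal ((1 / a ^ ((1:ℝ)/2)) * ∑' n : ℤ, Real.exp (-π / a * ((n:ℝ) + x) ^ 2)) := by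
    rw [Complex.ofReal_mul, Complex.ofReal_tsum]
    congr 1
    · rw [Complex.ofReal_div, Complex.ofReal_one, Complex.ofReal_cpow ha.le]
      norm_num
    · refine tsum_congr fun n ↦ ?_
      rw [Complex.ofReal_exp]
      congr 1
      have hIx : Complex.I * (-(Complex.I * (x:ℂ))) = (x:ℂ) := by
        rw [mul_neg, ← mul_assoc, Complex.I_mul_I]; ring
      rw [hIx]
      push_cast
      ring
  rw [hL, key, hR, Complex.ofReal_re]

private lemma tsum_int_even {f : ℤ → ℝ} (hf : Summable f) (heven : ∀ n : ℤ, f (-n) = f n) :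
    ∑' n : ℤ, f n = f 0 + 2 * ∑' k : ℕ, f ((k : ℤ) + 1) := by
  have h1 : Summable fun k : ℕ ↦ f k := hf.comp_injective Nat.cast_injective
  have h2 : Summable fun k : ℕ ↦ f (-((k : ℤ) + 1)) :=
    hf.comp_injective (fun i j h ↦ by simpa using h)
  rw [tsum_of_nat_of_neg_add_one h1 h2, h1.tsum_eq_zero_add]
  have e1 : ∑' k : ℕ, f (-((k:ℤ) + 1)) = ∑' k : ℕ, f ((k:ℤ) + 1) :=
    tsum_congr fun k ↦ heven _
  have e2 : ∑' k : ℕ, f ((k + 1 : ℕ) : ℤ) = ∑' k : ℕ, f ((k:ℤ) + 1) :=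
    tsum_congr fun k ↦ by push_cast; ring_nf
  rw [e1, e2]
  push_cast
  ring

/-- Poisson-resummation identity for the inverse Laplace transform of the inverse total
Dirichlet-to-Neumann operator of two glued intervals. -/
theorem glued_intervals_poisson_resummation (L₁ L₂ t : ℝ)
    (h1 : 0 < L₁) (h2 : 0 < L₂) (ht : 0 < t) :
    2 * ∑' k : ℕ,
        ((-1:ℝ)^((k:ℕ)+1+1) / (L₁ + L₂)) *
          Real.exp (-(Real.pi^2 * ((k:ℝ)+1)^2 * t / (L₁ + L₂)^2)) *
          Real.sin (Real.pi * ((k:ℝ)+1) * L₁ / (L₁ + L₂)) *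
          Real.sin (Real.pi * ((k:ℝ)+1) * L₂ / (L₁ + L₂))
      = (4 * Real.pi * t) ^ (-(1:ℝ)/2) *
        ∑' n : ℤ, (Real.exp (-((L₁ + L₂)^2 * (n:ℝ)^2 / t))
          - Real.exp (-((((n:ℝ)+1) * L₁ + (n:ℝ) * L₂)^2 / t))) := by
  set L : ℝ := L₁ + L₂ with hLdef
  have hL : 0 < L := by positivity
  have hLne : L ≠ 0 := hL.ne'
  set a : ℝ := π * t / L ^ 2 with hadef
  have ha : 0 < a := by positivity
  set x : ℝ := L₁ / L with hxdef
  -- summabilities over ℤ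
  have hs1 : Summable fun n : ℤ ↦ Real.exp (-π * a * (n:ℝ) ^ 2) := by
    refine (summable_gauss_shift 0 (π * a) (by positivity)).congr fun n ↦ ?_
    push_cast
    ring_nf
  have hs2 : Summable fun n : ℤ ↦ Real.exp (-π * a * (n:ℝ) ^ 2) * Real.cos (2 * π * x * (n:ℝ)) := by
    refine Summable.of_norm_bounded hs1 fun n ↦ ?_
    rw [norm_mul, Real.norm_eq_abs, Real.norm_eq_abs, Real.abs_exp]
    nlinarith [Real.exp_pos (-π * a * (n:ℝ) ^ 2), Real.abs_cos_le_one (2 * π * x * (n:ℝ)),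
      abs_nonneg (Real.cos (2 * π * x * (n:ℝ)))]
  have hg : Summable fun n : ℤ ↦
      Real.exp (-π * a * (n:ℝ) ^ 2) - Real.exp (-π * a * (n:ℝ) ^ 2) * Real.cos (2 * π * x * (n:ℝ)) :=
    hs1.sub hs2
  have heven : ∀ n : ℤ,
      Real.exp (-π * a * ((-n : ℤ):ℝ) ^ 2) - Real.exp (-π * a * ((-n : ℤ):ℝ) ^ 2)
          * Real.cos (2 * π * x * ((-n : ℤ):ℝ))
      = Real.exp (-π * a * (n:ℝ) ^ 2) - Real.exp (-π * a * (n:ℝ) ^ 2)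
          * Real.cos (2 * π * x * (n:ℝ)) := by
    intro n
    push_cast
    rw [mul_neg, Real.cos_neg, neg_sq]
  have hsplit := tsum_int_even hg heven
  have hA : Summable fun n : ℤ ↦ Real.exp (-π / a * (n:ℝ) ^ 2) := by
    refine (summable_gauss_shift 0 (π / a) (by positivity)).congr fun n ↦ ?_
    push_cast
    ring_nf
  have hB : Summable fun n : ℤ ↦ Real.exp (-π / a * ((n:ℝ) + x) ^ 2) := by
    refine (summable_gauss_shift x (π / a) (by positivity)).congr fun n ↦ ?_
    ring_nf
  -- termwise identity for the left-hand sum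
  have hterm : ∀ k : ℕ,
      ((-1:ℝ)^(k+1+1) / L) * Real.exp (-(π^2 * ((k:ℝ)+1)^2 * t / L^2)) *
          Real.sin (π * ((k:ℝ)+1) * L₁ / L) * Real.sin (π * ((k:ℝ)+1) * L₂ / L)
        = (1/(2*L)) * (Real.exp (-π * a * ((k:ℝ)+1) ^ 2)
            - Real.exp (-π * a * ((k:ℝ)+1) ^ 2) * Real.cos (2 * π * x * ((k:ℝ)+1))) := by
    intro k
    have hsin : Real.sin (π * ((k:ℝ)+1) * L₂ / L)
        = -((-1:ℝ)^(k+1) * Real.sin (π * ((k:ℝ)+1) * L₁ / L)) := by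
      have harg : π * ((k:ℝ)+1) * L₂ / L = ((k+1 : ℕ) : ℝ) * π - π * ((k:ℝ)+1) * L₁ / L := by
        rw [hLdef]
        push_cast
        field_simp
        ring
      rw [harg, Real.sin_nat_mul_pi_sub]
    have hexp : -(π^2 * ((k:ℝ)+1)^2 * t / L^2) = -π * a * ((k:ℝ)+1) ^ 2 := by
      rw [hadef]
      field_simp
    have hcos : Real.cos (2 * π * x * ((k:ℝ)+1))
        = 1 - 2 * Real.sin (π * ((k:ℝ)+1) * L₁ / L) ^ 2 := by
      have h := Real.sin_sq_eq_half_sub (π * ((k:ℝ)+1) * L₁ / L)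
      have harg : 2 * (π * ((k:ℝ)+1) * L₁ / L) = 2 * π * x * ((k:ℝ)+1) := by
        rw [hxdef]
        field_simp
      rw [← harg]
      linarith
    have hp1 : (-1:ℝ)^(k+1+1) = (-1:ℝ)^k := by rw [pow_succ, pow_succ]; ring
    have hp2 : (-1:ℝ)^(k+1) = -(-1:ℝ)^k := by rw [pow_succ]; ring
    rw [hsin, hexp, hcos, hp1, hp2]
    rcases Nat.even_or_odd k with h | h
    · rw [h.neg_one_pow]; field_simp; ring
    · rw [h.neg_one_pow]; field_simp; ring
  -- termwise identity for the right-hand sum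
  have hRHSterm : ∀ n : ℤ,
      Real.exp (-(L^2 * (n:ℝ)^2 / t)) - Real.exp (-((((n:ℝ)+1) * L₁ + (n:ℝ) * L₂)^2 / t))
        = Real.exp (-π / a * (n:ℝ) ^ 2) - Real.exp (-π / a * ((n:ℝ) + x) ^ 2) := by
    intro n
    have e1 : -(L^2 * (n:ℝ)^2 / t) = -π / a * (n:ℝ) ^ 2 := by
      rw [hadef]
      field_simp
    have e2 : -((((n:ℝ)+1) * L₁ + (n:ℝ) * L₂)^2 / t) = -π / a * ((n:ℝ) + x) ^ 2 := by
      rw [hadef, hxdef, hLdef]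
      field_simp
      ring
    rw [e1, e2]
  -- the theta transformations
  have hth1 := Real.tsum_exp_neg_mul_int_sq ha
  have hth2 := theta_cos a x ha
  -- scalar prefactor identity
  have hsqrt : (0:ℝ) < Real.sqrt (π * t) := Real.sqrt_pos.mpr (by positivity)
  have hscal : (1/(2*L)) * (1 / a ^ ((1:ℝ)/2)) = (4 * π * t) ^ (-(1:ℝ)/2) := by
    have h4 : (4 * π * t : ℝ) = (2 * Real.sqrt (π * t))^2 := by
      rw [mul_pow, Real.sq_sqrt (by positivity : (0:ℝ) ≤ π * t)]
      ring
    have hrw : (4 * π * t : ℝ) ^ (-(1:ℝ)/2) = (2 * Real.sqrt (π * t))⁻¹ := by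
      rw [show (-(1:ℝ)/2) = -(1/2 : ℝ) by norm_num, Real.rpow_neg (by positivity),
        ← Real.sqrt_eq_rpow, h4, Real.sqrt_sq (by positivity)]
    have hasq : a ^ ((1:ℝ)/2) = Real.sqrt (π * t) / L := by
      rw [← Real.sqrt_eq_rpow, hadef, Real.sqrt_div (by positivity : (0:ℝ) ≤ π * t),
        Real.sqrt_sq hL.le]
    rw [hrw, hasq]
    field_simp
  have hNat : ∑' k : ℕ, ((1/(2*L)) * (Real.exp (-π * a * ((k:ℝ)+1) ^ 2)
      - Real.exp (-π * a * ((k:ℝ)+1) ^ 2) * Real.cos (2 * π * x * ((k:ℝ)+1))))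
      = (1/(2*L)) * ((1/2) * ∑' n : ℤ, (Real.exp (-π * a * (n:ℝ) ^ 2)
          - Real.exp (-π * a * (n:ℝ) ^ 2) * Real.cos (2 * π * x * (n:ℝ)))) := by
    rw [tsum_mul_left, hsplit]
    have hc : ∑' k : ℕ, (Real.exp (-π * a * (((k:ℤ)+1 : ℤ):ℝ) ^ 2)
        - Real.exp (-π * a * (((k:ℤ)+1 : ℤ):ℝ) ^ 2) * Real.cos (2 * π * x * (((k:ℤ)+1 : ℤ):ℝ)))
        = ∑' k : ℕ, (Real.exp (-π * a * ((k:ℝ)+1) ^ 2)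
        - Real.exp (-π * a * ((k:ℝ)+1) ^ 2) * Real.cos (2 * π * x * ((k:ℝ)+1))) := by
      refine tsum_congr fun k ↦ ?_
      push_cast
      ring_nf
    rw [hc]
    norm_num
    exact Or.inl (by ring)
  rw [tsum_congr hterm, hNat, hs1.tsum_sub hs2, hth1, hth2,
    tsum_congr hRHSterm, hA.tsum_sub hB, ← hscal]
  ring
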